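/- For discrete incremental voting on a connected finite graph with initial opinions in {1,...,k}, the expected time to reach consensus is at most (k−1)·T_{2-vote} = O(k·T_{2-vote}), where T_{2-vote} is the worst-case expected consensus time of standard two-opinion pull voting (of the corresponding variant) on the same graph. -/

import Mathlib

/-!
STATEMENT 6: For discrete incremental voting on a connected finite graph with initial
opinions in `{1,...,k}`, the expected time to reach consensus is at most
`(k−1)·T_{2-vote}`, where `T_{2-vote}` is the worst-case expected consensus time of
standard two-opinion pull voting (of the corresponding variant) on the same graph.

Expected times are expressed via `E[τ] = ∑_{t≥0} P(τ > t)`, using that the consensus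
states are absorbing for both processes.
-/

namespace IncrementalVoting6

/-- The incremental voting update rule. -/
def updateRule (a b : ℤ) : ℤ := if a < b then a + 1 else if b < a then a - 1 else a

/-- The three variants of the process. -/
inductive ProcKind | edge | vertexAsync | vertexSync

variable {V : Type} [Fintype V] [DecidableEq V] [Nonempty V]

/-- The space of random choices driving one step of each process variant. -/
def Drive (G : SimpleGraph V) [DecidableRel G.Adj] : ProcKind → Type
  | ProcKind.edge => G.Dart
  | ProcKind.vertexAsync => V × (Π v : V, G.neighborFinset v)
  | ProcKind.vertexSync => Π v : V, G.neighborFinset v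

instance (G : SimpleGraph V) [DecidableRel G.Adj] : ∀ pk : ProcKind, Fintype (Drive G pk)
  | ProcKind.edge => by unfold Drive; infer_instance
  | ProcKind.vertexAsync => by unfold Drive; infer_instance
  | ProcKind.vertexSync => by unfold Drive; infer_instance

/-- The uniform distribution of the random choices driving one step. -/
noncomputable def drivePMF (G : SimpleGraph V) [DecidableRel G.Adj]
    (hdeg : ∀ v, 0 < G.degree v) : ∀ pk : ProcKind, PMF (Drive G pk)
  | ProcKind.edge =>
      haveI : Nonempty G.Dart := by
        obtain ⟨v⟩ := ‹Nonempty V›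
        obtain ⟨w, hw⟩ := Finset.card_pos.mp (hdeg v)
        exact ⟨⟨(v, w), (SimpleGraph.mem_neighborFinset G v w).mp hw⟩⟩
      PMF.uniformOfFintype G.Dart
  | ProcKind.vertexAsync =>
      haveI : ∀ v : V, Nonempty (G.neighborFinset v) :=
        fun v => (Finset.card_pos.mp (hdeg v)).to_subtype
      PMF.uniformOfFintype (V × (Π v : V, G.neighborFinset v))
  | ProcKind.vertexSync =>
      haveI : ∀ v : V, Nonempty (G.neighborFinset v) :=
        fun v => (Finset.card_pos.mp (hdeg v)).to_subtype
      PMF.uniformOfFintype (Π v : V, G.neighborFinset v)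

/-- The effect of one incremental voting step on the configuration `x`. -/
def applyDrive (G : SimpleGraph V) [DecidableRel G.Adj] (x : V → ℤ) :
    ∀ pk : ProcKind, Drive G pk → (V → ℤ)
  | ProcKind.edge => fun d =>
      Function.update x d.toProd.1 (updateRule (x d.toProd.1) (x d.toProd.2))
  | ProcKind.vertexAsync => fun vc =>
      Function.update x vc.1 (updateRule (x vc.1) (x (vc.2 vc.1)))
  | ProcKind.vertexSync => fun c => fun v => updateRule (x v) (x (c v))

/-- The effect of one standard (two-opinion) pull-voting step on the configuration `y`:
the updating vertex adopts the observed neighbour's opinion. -/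
def applyDrivePV (G : SimpleGraph V) [DecidableRel G.Adj] (y : V → Bool) :
    ∀ pk : ProcKind, Drive G pk → (V → Bool)
  | ProcKind.edge => fun d => Function.update y d.toProd.1 (y d.toProd.2)
  | ProcKind.vertexAsync => fun vc => Function.update y vc.1 (y (vc.2 vc.1))
  | ProcKind.vertexSync => fun c => fun v => y (c v)

/-- The distribution of the incremental voting configuration after `t` steps. -/
noncomputable def dist (G : SimpleGraph V) [DecidableRel G.Adj]
    (hdeg : ∀ v, 0 < G.degree v) (pk : ProcKind) (x0 : V → ℤ) : ℕ → PMF (V → ℤ)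
  | 0 => PMF.pure x0
  | t + 1 => (dist G hdeg pk x0 t).bind
      (fun x => (drivePMF G hdeg pk).map (fun d => applyDrive G x pk d))

/-- The distribution of the two-opinion pull-voting configuration after `t` steps. -/
noncomputable def distPV (G : SimpleGraph V) [DecidableRel G.Adj]
    (hdeg : ∀ v, 0 < G.degree v) (pk : ProcKind) (y0 : V → Bool) : ℕ → PMF (V → Bool)
  | 0 => PMF.pure y0
  | t + 1 => (distPV G hdeg pk y0 t).bind
      (fun y => (drivePMF G hdeg pk).map (fun d => applyDrivePV G y pk d))

/-- The probability of an event under a probability mass function (in `ℝ≥0∞`). -/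
noncomputable def probE {α : Type*} (p : PMF α) (A : Set α) : ENNReal :=
  ∑' a, A.indicator p a

/-- The expected number of steps until one of the two extreme opinions `ℓ`, `r` of the
initial configuration `x0` is eliminated, via `E[τ] = ∑_{t≥0} P(τ > t)`. -/
noncomputable def elimTime (G : SimpleGraph V) [DecidableRel G.Adj]
    (hdeg : ∀ v, 0 < G.degree v) (pk : ProcKind) (x0 : V → ℤ) (ℓ r : ℤ) : ENNReal :=
  ∑' t : ℕ, probE (dist G hdeg pk x0 t) {x | (∃ v, x v = ℓ) ∧ (∃ v, x v = r)}

/-- The expected consensus time of two-opinion pull voting started from `y0`. -/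
noncomputable def consTimePV (G : SimpleGraph V) [DecidableRel G.Adj]
    (hdeg : ∀ v, 0 < G.degree v) (pk : ProcKind) (y0 : V → Bool) : ENNReal :=
  ∑' t : ℕ, probE (distPV G hdeg pk y0 t) {y | ¬ ∃ b : Bool, ∀ v, y v = b}

/-- The expected consensus time of incremental voting started from `x0`. -/
noncomputable def consTimeInc (G : SimpleGraph V) [DecidableRel G.Adj]
    (hdeg : ∀ v, 0 < G.degree v) (pk : ProcKind) (x0 : V → ℤ) : ENNReal :=
  ∑' t : ℕ, probE (dist G hdeg pk x0 t) {x | ¬ ∃ j : ℤ, ∀ v, x v = j}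

/-! ### Auxiliary development -/

section Aux

lemma updateRule_lb {l a b : ℤ} (ha : l ≤ a) (hb : l ≤ b) : l ≤ updateRule a b := by
  unfold updateRule; split_ifs <;> omega

lemma updateRule_ub {r a b : ℤ} (ha : a ≤ r) (hb : b ≤ r) : updateRule a b ≤ r := by
  unfold updateRule; split_ifs <;> omega

lemma updateRule_lt_lb {l a b : ℤ} (ha : l ≤ a) (hb : l < b) : l < updateRule a b := by
  unfold updateRule; split_ifs <;> omega

lemma updateRule_lt_ub {r a b : ℤ} (ha : a ≤ r) (hb : b < r) : updateRule a b < r := by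
  unfold updateRule; split_ifs <;> omega

/-! #### `probE` basics -/

lemma probE_eq {α : Type*} (p : PMF α) (A : Set α) :
    probE p A = ∑' a, p a * A.indicator 1 a := by
  refine tsum_congr fun a => ?_
  by_cases h : a ∈ A <;> simp [Set.indicator_apply, h]

lemma probE_pure {α : Type*} (a : α) (A : Set α) :
    probE (PMF.pure a) A = A.indicator 1 a := by
  rw [probE_eq, tsum_eq_single a]
  · simp [PMF.pure_apply]
  · intro b hb
    simp [PMF.pure_apply, hb]

lemma probE_bind {α β : Type*} (p : PMF α) (f : α → PMF β) (A : Set β) :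
    probE (p.bind f) A = ∑' a, p a * probE (f a) A := by
  rw [probE_eq]
  simp only [PMF.bind_apply]
  have h1 : ∀ b, (∑' a, p a * f a b) * A.indicator 1 b
      = ∑' a, p a * (f a b * A.indicator 1 b) := by
    intro b
    rw [← ENNReal.tsum_mul_right]
    exact tsum_congr fun a => mul_assoc _ _ _
  rw [tsum_congr h1, ENNReal.tsum_comm]
  exact tsum_congr fun a => by rw [ENNReal.tsum_mul_left, probE_eq]

lemma probE_map {α β : Type*} (p : PMF α) (f : α → β) (A : Set β) :
    probE (p.map f) A = probE p (f ⁻¹' A) := by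
  rw [← PMF.bind_pure_comp, probE_bind, probE_eq]
  refine tsum_congr fun a => ?_
  simp only [Function.comp_apply, probE_pure]
  by_cases h : f a ∈ A <;> simp [Set.indicator_apply, h]

lemma probE_mono {α : Type*} (p : PMF α) {A B : Set α}
    (h : ∀ a ∈ p.support, a ∈ A → a ∈ B) : probE p A ≤ probE p B := by
  refine ENNReal.tsum_le_tsum fun a => ?_
  by_cases hp : p a = 0
  · by_cases hA : a ∈ A <;> by_cases hB : a ∈ B <;>
      simp [Set.indicator_apply, hA, hB, hp]
  · by_cases hA : a ∈ A
    · have hB := h a hp hA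
      simp [Set.indicator_apply, hA, hB]
    · simp [Set.indicator_apply, hA]

lemma probE_eq_zero {α : Type*} (p : PMF α) {A : Set α}
    (h : ∀ a ∈ p.support, a ∉ A) : probE p A = 0 := by
  refine ENNReal.tsum_eq_zero.mpr fun a => ?_
  by_cases hp : p a = 0
  · by_cases hA : a ∈ A <;> simp [Set.indicator_apply, hA, hp]
  · simp [Set.indicator_apply, h a hp]

end Aux

section Chain

variable {V : Type} [Fintype V] [DecidableEq V] [Nonempty V]
variable (G : SimpleGraph V) [DecidableRel G.Adj] (hdeg : ∀ v, 0 < G.degree v) (pk : ProcKind)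

/-- One-step transition kernel of incremental voting. -/
noncomputable def step (x : V → ℤ) : PMF (V → ℤ) :=
  (drivePMF G hdeg pk).map (fun d => applyDrive G x pk d)

lemma dist_zero (x0 : V → ℤ) : dist G hdeg pk x0 0 = PMF.pure x0 := rfl

lemma dist_succ (x0 : V → ℤ) (t : ℕ) :
    dist G hdeg pk x0 (t + 1) = (dist G hdeg pk x0 t).bind (step G hdeg pk) := rfl

lemma distPV_succ (y0 : V → Bool) (t : ℕ) :
    distPV G hdeg pk y0 (t + 1) = (distPV G hdeg pk y0 t).bind
      (fun y => (drivePMF G hdeg pk).map (fun d => applyDrivePV G y pk d)) := rfl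

/-- Chapman–Kolmogorov: peel off the first step. -/
lemma dist_succ' (x0 : V → ℤ) (t : ℕ) :
    dist G hdeg pk x0 (t + 1) = (step G hdeg pk x0).bind (fun x1 => dist G hdeg pk x1 t) := by
  induction t generalizing x0 with
  | zero =>
    rw [dist_succ, dist_zero, PMF.pure_bind]
    exact (PMF.bind_pure _).symm
  | succ t ih =>
    rw [dist_succ, ih, PMF.bind_bind]
    exact congrArg _ (funext fun x1 => (dist_succ G hdeg pk x1 t).symm)

lemma mem_support_step {x x1 : V → ℤ} (hx1 : x1 ∈ (step G hdeg pk x).support) :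
    ∃ d, x1 = applyDrive G x pk d := by
  rw [step, PMF.support_map] at hx1
  obtain ⟨d, _, rfl⟩ := hx1
  exact ⟨d, rfl⟩

end Chain

section Bounds

variable {V : Type} [Fintype V] [DecidableEq V] [Nonempty V]

lemma applyDrive_bounds {G : SimpleGraph V} [DecidableRel G.Adj] {x : V → ℤ} {l r : ℤ}
    (h : ∀ v, l ≤ x v ∧ x v ≤ r) :
    ∀ (pk : ProcKind) (d : Drive G pk) (v : V),
      l ≤ applyDrive G x pk d v ∧ applyDrive G x pk d v ≤ r
  | ProcKind.edge, d, v => by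
    simp only [applyDrive, Function.update_apply]
    split_ifs with hv
    · exact ⟨updateRule_lb (h _).1 (h _).1, updateRule_ub (h _).2 (h _).2⟩
    · exact h v
  | ProcKind.vertexAsync, d, v => by
    simp only [applyDrive, Function.update_apply]
    split_ifs with hv
    · exact ⟨updateRule_lb (h _).1 (h _).1, updateRule_ub (h _).2 (h _).2⟩
    · exact h v
  | ProcKind.vertexSync, d, v => by
    simp only [applyDrive]
    exact ⟨updateRule_lb (h _).1 (h _).1, updateRule_ub (h _).2 (h _).2⟩

variable (G : SimpleGraph V) [DecidableRel G.Adj] (hdeg : ∀ v, 0 < G.degree v) (pk : ProcKind)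

lemma dist_support_bounds {x0 : V → ℤ} {l r : ℤ} (h : ∀ v, l ≤ x0 v ∧ x0 v ≤ r) (t : ℕ) :
    ∀ z ∈ (dist G hdeg pk x0 t).support, ∀ v, l ≤ z v ∧ z v ≤ r := by
  induction t generalizing x0 with
  | zero =>
    intro z hz
    rw [dist_zero, PMF.support_pure, Set.mem_singleton_iff] at hz
    exact hz ▸ h
  | succ t ih =>
    intro z hz
    rw [dist_succ', PMF.support_bind] at hz
    simp only [Set.mem_iUnion] at hz
    obtain ⟨x1, hx1, hz⟩ := hz
    obtain ⟨d, rfl⟩ := mem_support_step G hdeg pk hx1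
    exact ih (applyDrive_bounds h pk d) z hz

/-! #### Extremes -/

/-- The minimum opinion. -/
noncomputable def loE (x : V → ℤ) : ℤ := Finset.univ.inf' Finset.univ_nonempty x

/-- The maximum opinion. -/
noncomputable def hiE (x : V → ℤ) : ℤ := Finset.univ.sup' Finset.univ_nonempty x

lemma loE_le (x : V → ℤ) (v : V) : loE x ≤ x v :=
  Finset.inf'_le _ (Finset.mem_univ v)

lemma le_hiE (x : V → ℤ) (v : V) : x v ≤ hiE x :=
  Finset.le_sup' _ (Finset.mem_univ v)

lemma le_loE {x : V → ℤ} {l : ℤ} (h : ∀ v, l ≤ x v) : l ≤ loE x :=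
  Finset.le_inf' _ _ fun v _ => h v

lemma hiE_le {x : V → ℤ} {r : ℤ} (h : ∀ v, x v ≤ r) : hiE x ≤ r :=
  Finset.sup'_le _ _ fun v _ => h v

lemma exists_loE (x : V → ℤ) : ∃ v, x v = loE x := by
  obtain ⟨v, -, hv⟩ := Finset.exists_mem_eq_inf' (Finset.univ_nonempty (α := V)) x
  exact ⟨v, hv.symm⟩

lemma exists_hiE (x : V → ℤ) : ∃ v, x v = hiE x := by
  obtain ⟨v, -, hv⟩ := Finset.exists_mem_eq_sup' (Finset.univ_nonempty (α := V)) x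
  exact ⟨v, hv.symm⟩

end Bounds

section Coupling

variable {V : Type} [Fintype V] [DecidableEq V] [Nonempty V]

/-- The coupling invariant relative to the extremes `l < r`. -/
def Inv (l r : ℤ) (p : (V → ℤ) × (V → Bool)) : Prop :=
  (∀ v, l ≤ p.1 v ∧ p.1 v ≤ r) ∧
  (∀ v, (p.2 v = true → l < p.1 v) ∧ (p.2 v = false → p.1 v < r))

lemma Inv_step {G : SimpleGraph V} [DecidableRel G.Adj] {l r : ℤ}
    {x : V → ℤ} {y : V → Bool} (h : Inv l r (x, y)) :
    ∀ (pk : ProcKind) (d : Drive G pk),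
      Inv l r (applyDrive G x pk d, applyDrivePV G y pk d)
  | ProcKind.edge, d => by
    refine ⟨applyDrive_bounds h.1 _ d, fun v => ?_⟩
    simp only [applyDrive, applyDrivePV, Function.update_apply]
    split_ifs with hv
    · exact ⟨fun ht => updateRule_lt_lb (h.1 _).1 ((h.2 _).1 ht),
        fun hf => updateRule_lt_ub (h.1 _).2 ((h.2 _).2 hf)⟩
    · exact h.2 v
  | ProcKind.vertexAsync, d => by
    refine ⟨applyDrive_bounds h.1 _ d, fun v => ?_⟩
    simp only [applyDrive, applyDrivePV, Function.update_apply]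
    split_ifs with hv
    · exact ⟨fun ht => updateRule_lt_lb (h.1 _).1 ((h.2 _).1 ht),
        fun hf => updateRule_lt_ub (h.1 _).2 ((h.2 _).2 hf)⟩
    · exact h.2 v
  | ProcKind.vertexSync, d => by
    refine ⟨applyDrive_bounds h.1 _ d, fun v => ?_⟩
    simp only [applyDrive, applyDrivePV]
    exact ⟨fun ht => updateRule_lt_lb (h.1 _).1 ((h.2 _).1 ht),
      fun hf => updateRule_lt_ub (h.1 _).2 ((h.2 _).2 hf)⟩

variable (G : SimpleGraph V) [DecidableRel G.Adj] (hdeg : ∀ v, 0 < G.degree v) (pk : ProcKind)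

/-- The joint (coupled) chain: incremental voting and pull voting driven by
the same random choices. -/
noncomputable def jdist (p0 : (V → ℤ) × (V → Bool)) : ℕ → PMF ((V → ℤ) × (V → Bool))
  | 0 => PMF.pure p0
  | t + 1 => (jdist p0 t).bind
      (fun p => (drivePMF G hdeg pk).map
        (fun d => (applyDrive G p.1 pk d, applyDrivePV G p.2 pk d)))

lemma jdist_fst (p0 : (V → ℤ) × (V → Bool)) (t : ℕ) :
    (jdist G hdeg pk p0 t).map Prod.fst = dist G hdeg pk p0.1 t := by
  induction t with
  | zero => rw [jdist, dist_zero, PMF.pure_map]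
  | succ t ih =>
    rw [jdist, dist_succ, PMF.map_bind, ← ih, PMF.bind_map]
    refine congrArg _ (funext fun p => ?_)
    rw [PMF.map_comp]
    rfl

lemma jdist_snd (p0 : (V → ℤ) × (V → Bool)) (t : ℕ) :
    (jdist G hdeg pk p0 t).map Prod.snd = distPV G hdeg pk p0.2 t := by
  induction t with
  | zero => rw [jdist, PMF.pure_map]; rfl
  | succ t ih =>
    rw [jdist, distPV_succ, PMF.map_bind, ← ih, PMF.bind_map]
    refine congrArg _ (funext fun p => ?_)
    rw [PMF.map_comp]
    rfl

lemma jdist_support_inv {l r : ℤ} {p0 : (V → ℤ) × (V → Bool)} (h0 : Inv l r p0) (t : ℕ) :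
    ∀ p ∈ (jdist G hdeg pk p0 t).support, Inv l r p := by
  induction t with
  | zero =>
    intro p hp
    rw [jdist, PMF.support_pure, Set.mem_singleton_iff] at hp
    exact hp ▸ h0
  | succ t ih =>
    intro p hp
    rw [jdist, PMF.support_bind] at hp
    simp only [Set.mem_iUnion] at hp
    obtain ⟨q, hq, hp⟩ := hp
    rw [PMF.support_map] at hp
    obtain ⟨d, -, rfl⟩ := hp
    exact Inv_step (ih q hq) pk d

/-- Occupation time of the set of configurations of width `j`. -/
noncomputable def occ (j : ℤ) (x : V → ℤ) : ENNReal :=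
  ∑' t : ℕ, probE (dist G hdeg pk x t) {z | hiE z - loE z = j}

/-- **Coupling bound**: from a non-consensus state, the expected time during which
the width stays the same is at most the worst-case pull-voting consensus time. -/
lemma occ_self_le (x : V → ℤ) (hlt : loE x < hiE x) :
    occ G hdeg pk (hiE x - loE x) x ≤ ⨆ y0 : V → Bool, consTimePV G hdeg pk y0 := by
  classical
  set l := loE x with hl
  set r := hiE x with hr
  set y0 : V → Bool := fun v => decide (l < x v) with hy0
  have h0 : Inv l r (x, y0) := by
    refine ⟨fun v => ⟨loE_le x v, le_hiE x v⟩, fun v => ?_⟩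
    constructor
    · intro ht
      exact of_decide_eq_true ht
    · intro hf
      have h1 : ¬ l < x v := of_decide_eq_false hf
      show x v < r
      omega
  have key : ∀ t, probE (dist G hdeg pk x t) {z | hiE z - loE z = r - l}
      ≤ probE (distPV G hdeg pk y0 t) {y | ¬ ∃ b : Bool, ∀ v, y v = b} := by
    intro t
    rw [← jdist_fst G hdeg pk (x, y0) t, ← jdist_snd G hdeg pk (x, y0) t,
      probE_map, probE_map]
    refine probE_mono _ fun p hp hpA => ?_
    have hi := jdist_support_inv G hdeg pk h0 t p hp
    simp only [Set.mem_preimage, Set.mem_setOf_eq] at hpA ⊢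
    have hlo : l ≤ loE p.1 := le_loE fun v => (hi.1 v).1
    have hhi : hiE p.1 ≤ r := hiE_le fun v => (hi.1 v).2
    obtain ⟨v0⟩ := ‹Nonempty V›
    have hle : loE p.1 ≤ hiE p.1 := (loE_le p.1 v0).trans (le_hiE p.1 v0)
    have hloeq : loE p.1 = l := by omega
    have hhieq : hiE p.1 = r := by omega
    obtain ⟨vl, hvl⟩ := exists_loE p.1
    obtain ⟨vr, hvr⟩ := exists_hiE p.1
    rintro ⟨b, hb⟩
    cases b with
    | true =>
      have := (hi.2 vl).1 (hb vl)
      omega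
    | false =>
      have := (hi.2 vr).2 (hb vr)
      omega
  calc occ G hdeg pk (r - l) x
      ≤ ∑' t : ℕ, probE (distPV G hdeg pk y0 t) {y | ¬ ∃ b : Bool, ∀ v, y v = b} :=
        ENNReal.tsum_le_tsum key
    _ = consTimePV G hdeg pk y0 := rfl
    _ ≤ ⨆ y0 : V → Bool, consTimePV G hdeg pk y0 := le_iSup _ y0

end Coupling

section Occupation

variable {V : Type} [Fintype V] [DecidableEq V] [Nonempty V]
variable (G : SimpleGraph V) [DecidableRel G.Adj] (hdeg : ∀ v, 0 < G.degree v) (pk : ProcKind)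

lemma occ_recursion (j : ℤ) (x : V → ℤ) :
    occ G hdeg pk j x = probE (PMF.pure x) {z | hiE z - loE z = j}
      + ∑' x1, step G hdeg pk x x1 * occ G hdeg pk j x1 := by
  rw [occ, tsum_eq_zero_add' ENNReal.summable]
  congr 1
  have h1 : ∀ t : ℕ, probE (dist G hdeg pk x (t + 1)) {z | hiE z - loE z = j}
      = ∑' x1, step G hdeg pk x x1 * probE (dist G hdeg pk x1 t) {z | hiE z - loE z = j} := by
    intro t
    rw [dist_succ', probE_bind]
  rw [tsum_congr h1, ENNReal.tsum_comm]
  refine tsum_congr fun x1 => ?_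
  rw [occ]
  exact ENNReal.tsum_mul_left

lemma occ_eq_zero (j : ℤ) {x : V → ℤ} (h : hiE x - loE x < j) : occ G hdeg pk j x = 0 := by
  rw [occ]
  refine ENNReal.tsum_eq_zero.mpr fun t => probE_eq_zero _ fun z hz hzA => ?_
  have hb := dist_support_bounds G hdeg pk (fun v => ⟨loE_le x v, le_hiE x v⟩) t z hz
  have h1 : loE x ≤ loE z := le_loE fun v => (hb v).1
  have h2 : hiE z ≤ hiE x := hiE_le fun v => (hb v).2
  simp only [Set.mem_setOf_eq] at hzA
  omega

/-- The supermartingale function for the occupation-time argument. -/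
noncomputable def gfun (j : ℤ) (M : ENNReal) (x : V → ℤ) : ENNReal :=
  if hiE x - loE x < j then 0 else if hiE x - loE x = j then occ G hdeg pk j x else M

lemma occ_le_of_width_eq {j : ℤ} (hj : 1 ≤ j) {x : V → ℤ} (hx : hiE x - loE x = j) :
    occ G hdeg pk j x ≤ ⨆ y0 : V → Bool, consTimePV G hdeg pk y0 := by
  have hlt : loE x < hiE x := by omega
  have := occ_self_le G hdeg pk x hlt
  rwa [hx] at this

lemma gfun_le {j : ℤ} (hj : 1 ≤ j) (x : V → ℤ) :
    gfun G hdeg pk j (⨆ y0 : V → Bool, consTimePV G hdeg pk y0) x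
      ≤ ⨆ y0 : V → Bool, consTimePV G hdeg pk y0 := by
  rw [gfun]
  split_ifs with h1 h2
  · exact zero_le
  · exact occ_le_of_width_eq G hdeg pk hj h2
  · exact le_rfl

lemma partial_occ_le_gfun {j : ℤ} (hj : 1 ≤ j) :
    ∀ (T : ℕ) (x : V → ℤ),
      ∑ t ∈ Finset.range T, probE (dist G hdeg pk x t) {z | hiE z - loE z = j}
        ≤ gfun G hdeg pk j (⨆ y0 : V → Bool, consTimePV G hdeg pk y0) x := by
  set M := ⨆ y0 : V → Bool, consTimePV G hdeg pk y0 with hM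
  intro T
  induction T with
  | zero => intro x; simp
  | succ T ih =>
    intro x
    rw [Finset.sum_range_succ']
    have hstep : ∀ t : ℕ, probE (dist G hdeg pk x (t + 1)) {z | hiE z - loE z = j}
        = ∑' x1, step G hdeg pk x x1 * probE (dist G hdeg pk x1 t) {z | hiE z - loE z = j} := by
      intro t
      rw [dist_succ', probE_bind]
    rw [Finset.sum_congr rfl fun t _ => hstep t, ← Summable.tsum_finsetSum fun t _ => ENNReal.summable]
    have hsum : ∑' x1, ∑ t ∈ Finset.range T,
          step G hdeg pk x x1 * probE (dist G hdeg pk x1 t) {z | hiE z - loE z = j}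
        ≤ ∑' x1, step G hdeg pk x x1 * gfun G hdeg pk j M x1 := by
      refine ENNReal.tsum_le_tsum fun x1 => ?_
      rw [← Finset.mul_sum]
      exact mul_le_mul_right (ih x1) _
    -- support width bound for one step
    have hwid : ∀ x1 ∈ (step G hdeg pk x).support, hiE x1 - loE x1 ≤ hiE x - loE x := by
      intro x1 hx1
      obtain ⟨d, rfl⟩ := mem_support_step G hdeg pk hx1
      have hb := applyDrive_bounds (fun v => ⟨loE_le x v, le_hiE x v⟩) pk d
      have h1 : loE x ≤ loE (applyDrive G x pk d) := le_loE fun v => (hb v).1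
      have h2 : hiE (applyDrive G x pk d) ≤ hiE x := hiE_le fun v => (hb v).2
      omega
    rcases lt_trichotomy (hiE x - loE x) j with hcase | hcase | hcase
    · -- width < j : everything vanishes
      have hzero : ∀ x1, step G hdeg pk x x1 * gfun G hdeg pk j M x1 = 0 := by
        intro x1
        by_cases hx1 : step G hdeg pk x x1 = 0
        · rw [hx1, zero_mul]
        · have := (hwid x1 hx1).trans_lt hcase
          rw [gfun, if_pos this, mul_zero]
      have hpure : probE (PMF.pure x) {z | hiE z - loE z = j} = 0 := by
        rw [probE_pure, Set.indicator_apply, if_neg]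
        simp only [Set.mem_setOf_eq]
        omega
      calc (∑' x1, ∑ t ∈ Finset.range T,
              step G hdeg pk x x1 * probE (dist G hdeg pk x1 t) {z | hiE z - loE z = j})
            + probE (dist G hdeg pk x 0) {z | hiE z - loE z = j}
          ≤ (∑' x1, step G hdeg pk x x1 * gfun G hdeg pk j M x1)
            + probE (PMF.pure x) {z | hiE z - loE z = j} := by
            rw [dist_zero]; exact add_le_add hsum le_rfl
        _ = 0 := by rw [hpure, ENNReal.tsum_eq_zero.mpr hzero, add_zero]
        _ ≤ gfun G hdeg pk j M x := zero_le
    · -- width = j : compare with occ via the recursion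
      have hgx : gfun G hdeg pk j M x = occ G hdeg pk j x := by
        rw [gfun, if_neg (by omega), if_pos hcase]
      have hterm : ∀ x1, step G hdeg pk x x1 * gfun G hdeg pk j M x1
          ≤ step G hdeg pk x x1 * occ G hdeg pk j x1 := by
        intro x1
        by_cases hx1 : step G hdeg pk x x1 = 0
        · rw [hx1, zero_mul, zero_mul]
        · have hw := (hwid x1 hx1).trans_eq hcase
          rcases lt_or_eq_of_le hw with hw' | hw'
          · rw [gfun, if_pos hw', mul_zero]
            exact zero_le
          · rw [gfun, if_neg (by omega), if_pos hw']
      calc (∑' x1, ∑ t ∈ Finset.range T,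
              step G hdeg pk x x1 * probE (dist G hdeg pk x1 t) {z | hiE z - loE z = j})
            + probE (dist G hdeg pk x 0) {z | hiE z - loE z = j}
          ≤ (∑' x1, step G hdeg pk x x1 * occ G hdeg pk j x1)
            + probE (PMF.pure x) {z | hiE z - loE z = j} := by
            rw [dist_zero]
            exact add_le_add (hsum.trans (ENNReal.tsum_le_tsum hterm)) le_rfl
        _ = probE (PMF.pure x) {z | hiE z - loE z = j}
            + ∑' x1, step G hdeg pk x x1 * occ G hdeg pk j x1 := add_comm _ _
        _ = occ G hdeg pk j x := (occ_recursion G hdeg pk j x).symm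
        _ = gfun G hdeg pk j M x := hgx.symm
    · -- width > j : bound by M
      have hgx : gfun G hdeg pk j M x = M := by
        rw [gfun, if_neg (by omega), if_neg (by omega)]
      have hpure : probE (PMF.pure x) {z | hiE z - loE z = j} = 0 := by
        rw [probE_pure, Set.indicator_apply, if_neg]
        simp only [Set.mem_setOf_eq]
        omega
      calc (∑' x1, ∑ t ∈ Finset.range T,
              step G hdeg pk x x1 * probE (dist G hdeg pk x1 t) {z | hiE z - loE z = j})
            + probE (dist G hdeg pk x 0) {z | hiE z - loE z = j}
          ≤ (∑' x1, step G hdeg pk x x1 * gfun G hdeg pk j M x1)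
            + probE (PMF.pure x) {z | hiE z - loE z = j} := by
            rw [dist_zero]; exact add_le_add hsum le_rfl
        _ ≤ (∑' x1, step G hdeg pk x x1 * M) + 0 := by
            rw [hpure]
            exact add_le_add (ENNReal.tsum_le_tsum fun x1 =>
              mul_le_mul_right (gfun_le G hdeg pk hj x1) _) le_rfl
        _ = M := by
            rw [add_zero, ENNReal.tsum_mul_right, PMF.tsum_coe, one_mul]
        _ = gfun G hdeg pk j M x := hgx.symm

/-- The total expected occupation time at width `j ≥ 1` is at most the worst-case
pull-voting consensus time, from any starting configuration. -/
lemma occ_le {j : ℤ} (hj : 1 ≤ j) (x : V → ℤ) :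
    occ G hdeg pk j x ≤ ⨆ y0 : V → Bool, consTimePV G hdeg pk y0 := by
  rw [occ, ENNReal.tsum_eq_iSup_nat]
  exact (iSup_le fun T => partial_occ_le_gfun G hdeg pk hj T x).trans
    (gfun_le G hdeg pk hj x)

end Occupation

/-- **The expected consensus time of discrete incremental voting with opinions in
`{1,...,k}` is at most `(k−1)` times the worst-case expected consensus time of
two-opinion pull voting** (for each of the three variants on a connected finite
graph); in particular it is `O(k·T_{2-vote})`. -/
theorem consensus_time_le_k_times_pull_voting_time
    (G : SimpleGraph V) [DecidableRel G.Adj] (hconn : G.Connected)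
    (hdeg : ∀ v, 0 < G.degree v) (pk : ProcKind)
    (k : ℕ) (x0 : V → ℤ) (hx0 : ∀ v, x0 v ∈ Finset.Icc (1 : ℤ) (k : ℤ)) :
    consTimeInc G hdeg pk x0 ≤
      ((k - 1 : ℕ) : ENNReal) * ⨆ y0 : V → Bool, consTimePV G hdeg pk y0 := by
  classical
  obtain ⟨v0⟩ := ‹Nonempty V›
  have hk1 : (1 : ℤ) ≤ (k : ℤ) := by
    have := Finset.mem_Icc.mp (hx0 v0); omega
  set M := ⨆ y0 : V → Bool, consTimePV G hdeg pk y0 with hM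
  have hbounds : ∀ v, (1 : ℤ) ≤ x0 v ∧ x0 v ≤ (k : ℤ) := fun v => Finset.mem_Icc.mp (hx0 v)
  have key : ∀ t : ℕ, probE (dist G hdeg pk x0 t) {x | ¬ ∃ j : ℤ, ∀ v, x v = j}
      ≤ ∑ j ∈ Finset.Icc 1 (k - 1),
          probE (dist G hdeg pk x0 t) {z | hiE z - loE z = (j : ℤ)} := by
    intro t
    have hswap : (∑ j ∈ Finset.Icc 1 (k - 1),
          probE (dist G hdeg pk x0 t) {z | hiE z - loE z = (j : ℤ)})
        = ∑' z, ∑ j ∈ Finset.Icc 1 (k - 1),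
            Set.indicator {z' | hiE z' - loE z' = (j : ℤ)} (dist G hdeg pk x0 t) z :=
      (Summable.tsum_finsetSum fun j _ => ENNReal.summable).symm
    rw [hswap]
    refine ENNReal.tsum_le_tsum fun z => ?_
    by_cases hz : (dist G hdeg pk x0 t) z = 0
    · have h0 : Set.indicator {x | ¬ ∃ j : ℤ, ∀ v, x v = j} (dist G hdeg pk x0 t) z = 0 := by
        by_cases hzA : z ∈ {x : V → ℤ | ¬ ∃ j : ℤ, ∀ v, x v = j} <;>
          simp [Set.indicator_apply, hzA, hz]
      rw [h0]
      exact zero_le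
    · by_cases hzA : z ∈ {x : V → ℤ | ¬ ∃ j : ℤ, ∀ v, x v = j}
      · have hb := dist_support_bounds G hdeg pk hbounds t z hz
        have hlo : (1 : ℤ) ≤ loE z := le_loE fun v => (hb v).1
        have hhi : hiE z ≤ (k : ℤ) := hiE_le fun v => (hb v).2
        have hne : loE z < hiE z := by
          by_contra hcon
          push_neg at hcon
          exact hzA ⟨loE z, fun v =>
            le_antisymm ((le_hiE z v).trans hcon) (loE_le z v)⟩
        set j : ℕ := (hiE z - loE z).toNat with hj
        have hjz : (j : ℤ) = hiE z - loE z := Int.toNat_of_nonneg (by omega)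
        have hjmem : j ∈ Finset.Icc 1 (k - 1) := by
          rw [Finset.mem_Icc]
          omega
        calc Set.indicator {x | ¬ ∃ i : ℤ, ∀ v, x v = i} (dist G hdeg pk x0 t) z
            = (dist G hdeg pk x0 t) z := Set.indicator_of_mem hzA _
          _ = Set.indicator {z' : V → ℤ | hiE z' - loE z' = (j : ℤ)}
                (dist G hdeg pk x0 t) z :=
              (Set.indicator_of_mem (by simp only [Set.mem_setOf_eq]; omega) _).symm
          _ ≤ ∑ i ∈ Finset.Icc 1 (k - 1),
                Set.indicator {z' : V → ℤ | hiE z' - loE z' = (i : ℤ)}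
                  (dist G hdeg pk x0 t) z :=
              Finset.single_le_sum
                (f := fun i : ℕ => Set.indicator
                  {z' : V → ℤ | hiE z' - loE z' = (i : ℤ)} (dist G hdeg pk x0 t) z)
                (fun i _ => zero_le) hjmem
      · rw [Set.indicator_of_notMem hzA]
        exact zero_le
  calc consTimeInc G hdeg pk x0
      ≤ ∑' t : ℕ, ∑ j ∈ Finset.Icc 1 (k - 1),
          probE (dist G hdeg pk x0 t) {z | hiE z - loE z = (j : ℤ)} :=
        ENNReal.tsum_le_tsum key
    _ = ∑ j ∈ Finset.Icc 1 (k - 1), occ G hdeg pk (j : ℤ) x0 :=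
        Summable.tsum_finsetSum fun j _ => ENNReal.summable
    _ ≤ ∑ _j ∈ Finset.Icc 1 (k - 1), M :=
        Finset.sum_le_sum fun j hj => occ_le G hdeg pk
          (by exact_mod_cast (Finset.mem_Icc.mp hj).1) x0
    _ = ((k - 1 : ℕ) : ENNReal) * M := by
        rw [Finset.sum_const, Nat.card_Icc, Nat.add_sub_cancel, nsmul_eq_mul]

end IncrementalVoting6
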